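/- Let λ₁ ≥ λ₂ ≥ … ≥ λ_l be positive integers such that λ_j divides λ_i whenever j ≥ i. If λ₂ + λ₃ + ⋯ + λ_l > λ₁, then there exists an index m with 2 ≤ m ≤ l such that λ₂ + λ₃ + ⋯ + λ_m = λ₁ exactly. -/

import Mathlib

/-- An integral partition: a finite (nonempty) multiset of positive integers. -/
def IsPartition (l : Multiset ℕ) : Prop := l ≠ 0 ∧ ∀ x ∈ l, 0 < x

/-- `Embeds l m` : the entries of `l` can be grouped and the groups assigned
bijectively (as a multiset) to the bins of `m`, each group fitting in its bin.
This is the bin-packing embedding `l ↪ m`. -/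
def Embeds (l m : Multiset ℕ) : Prop :=
  ∃ T : Multiset (Multiset ℕ × ℕ),
    (T.map Prod.fst).sum = l ∧ T.map Prod.snd = m ∧ ∀ q ∈ T, q.1.sum ≤ q.2

/-- The product of two partitions: all pairwise products of entries. -/
def mprod (l m : Multiset ℕ) : Multiset ℕ := l.bind fun a => m.map (a * ·)

/-- The `n`-fold product `l^{×n}`. -/
def prodPow (l : Multiset ℕ) : ℕ → Multiset ℕ
  | 0 => {1}
  | n + 1 => mprod l (prodPow l n)

/-- The `p`-norm of a partition: `(∑ λᵢ^p)^(1/p)`. -/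
noncomputable def pnorm (l : Multiset ℕ) (p : ℝ) : ℝ :=
  ((l.map fun a => (a : ℝ) ^ p).sum) ^ (1 / p)

/-- `l ⪯_S m` : for every positive `x`, the sum of the entries of `l` that
are `≥ x` is at most the corresponding sum for `m`. -/
def Supermajorized (l m : Multiset ℕ) : Prop :=
  ∀ x : ℕ, 0 < x →
    ((l.filter fun a => x ≤ a).sum ≤ (m.filter fun a => x ≤ a).sum)

/-- `l s↪ m` : there is a partition `ν` with `l×ν ↪ m×ν`. -/
def StablyEmbeds (l m : Multiset ℕ) : Prop :=
  ∃ ν : Multiset ℕ, IsPartition ν ∧ Embeds (mprod l ν) (mprod m ν)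

/-- `l b↪ m` : for every rational `ε > 0` there are positive integers `N, M`
with `M ≤ N(1+ε)` and `l^{×N} ↪ m^{×M}`. -/
def BulkEmbeds (l m : Multiset ℕ) : Prop :=
  ∀ ε : ℚ, 0 < ε → ∃ N M : ℕ, 0 < N ∧ 0 < M ∧ (M : ℚ) ≤ (N : ℚ) * (1 + ε) ∧
    Embeds (prodPow l N) (prodPow m M)

/-- Key arithmetic lemma: for positive integers `λ₁ ≥ λ₂ ≥ ⋯ ≥ λ_l` forming a
divisibility chain (`λ_j ∣ λ_i` whenever `i ≤ j`), if `λ₂ + ⋯ + λ_l > λ₁`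
then some prefix `λ₂ + ⋯ + λ_m` (with `2 ≤ m ≤ l`) equals `λ₁` exactly. -/
theorem stmt_10 (L : List ℕ) (hpos : ∀ x ∈ L, 0 < x)
    (hsort : L.Pairwise (· ≥ ·))
    (hdvd : ∀ i j : Fin L.length, i ≤ j → L.get j ∣ L.get i)
    (hne : 0 < L.length)
    (hgt : L.get ⟨0, hne⟩ < (L.drop 1).sum) :
    ∃ m : ℕ, 2 ≤ m ∧ m ≤ L.length ∧
      ((L.drop 1).take (m - 1)).sum = L.get ⟨0, hne⟩ := by
  classical
  have hTlen : (L.drop 1).length = L.length - 1 := by simp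
  have hTget : ∀ (k : ℕ) (hk : k < (L.drop 1).length),
      (L.drop 1)[k]'hk = L[k + 1]'(by omega) := by
    intro k hk
    rw [List.getElem_drop]
    congr 1
    omega
  have hex : ∃ k, L.get ⟨0, hne⟩ < ((L.drop 1).take k).sum :=
    ⟨(L.drop 1).length, by rw [List.take_length]; exact hgt⟩
  have hk0spec := Nat.find_spec hex
  have hk0min : ∀ j < Nat.find hex, ¬ L.get ⟨0, hne⟩ < ((L.drop 1).take j).sum :=
    fun j hj => Nat.find_min hex hj
  have hT0 : 0 < (L.drop 1).length := by
    by_contra h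
    push_neg at h
    have h0 : (L.drop 1) = [] := List.eq_nil_of_length_eq_zero (by omega)
    rw [h0] at hgt
    simp at hgt
  have hk0ge2 : 2 ≤ Nat.find hex := by
    rw [Nat.le_find_iff]
    intro j hj
    interval_cases j
    · simp
    · rw [not_lt, List.sum_take_succ _ 0 hT0, hTget 0 hT0]
      have h2 := hsort.rel_get_of_le (a := ⟨0, hne⟩) (b := ⟨1, by omega⟩) (by simp)
      simp only [List.get_eq_getElem] at h2 ⊢
      simpa using h2
  have hk0le : Nat.find hex ≤ (L.drop 1).length := by
    rw [Nat.find_le_iff]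
    exact ⟨(L.drop 1).length, le_refl _, by rw [List.take_length]; exact hgt⟩
  set k0 := Nat.find hex
  have hm'lt : k0 - 1 < (L.drop 1).length := by omega
  have hle : ((L.drop 1).take (k0 - 1)).sum ≤ L.get ⟨0, hne⟩ := by
    have := hk0min (k0 - 1) (by omega)
    omega
  have hlt : L.get ⟨0, hne⟩
      < ((L.drop 1).take (k0 - 1)).sum + (L.drop 1)[k0 - 1]'hm'lt := by
    rw [← List.sum_take_succ _ _ hm'lt]
    have h1 : k0 - 1 + 1 = k0 := by omega
    rw [h1]
    exact hk0spec
  have hk0L : k0 - 1 + 1 < L.length := by omega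
  have hdm : (L.drop 1)[k0 - 1]'hm'lt = L[k0 - 1 + 1]'hk0L := hTget _ hm'lt
  have hda : L[k0 - 1 + 1]'hk0L ∣ L.get ⟨0, hne⟩ :=
    hdvd ⟨0, hne⟩ ⟨k0 - 1 + 1, hk0L⟩ (by simp)
  have hdsum : L[k0 - 1 + 1]'hk0L ∣ ((L.drop 1).take (k0 - 1)).sum := by
    apply List.dvd_sum
    intro x hx
    rw [List.mem_iff_getElem] at hx
    obtain ⟨i, hi, rfl⟩ := hx
    have hi' : i < k0 - 1 := by
      have h3 := hi
      rw [List.length_take] at h3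
      omega
    rw [List.getElem_take, hTget i (by omega)]
    exact hdvd ⟨i + 1, by omega⟩ ⟨k0 - 1 + 1, hk0L⟩ (by simp; omega)
  have heq : ((L.drop 1).take (k0 - 1)).sum = L.get ⟨0, hne⟩ := by
    rw [hdm] at hlt
    have h1 : L[k0 - 1 + 1]'hk0L ∣ L.get ⟨0, hne⟩ - ((L.drop 1).take (k0 - 1)).sum :=
      Nat.dvd_sub hda hdsum
    have h2 := Nat.eq_zero_of_dvd_of_lt h1 (by omega)
    omega
  exact ⟨k0, hk0ge2, by omega, heq⟩
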